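/- Let C be an arc in K² with at least two points whose endpoints z and w are pure. If Γ⁻¹(C) is an 8-path in ℤ², then Γ⁻¹(z) and Γ⁻¹(w) are the two 8-endpoints of Γ⁻¹(C). -/

import Mathlib

open TopologicalSpace

/-- Basic (minimal) neighborhoods generating the Khalimsky topology on ℤ. -/
def khN (n : ℤ) : Set ℤ := if Odd n then {n} else {n - 1, n, n + 1}

/-- The Khalimsky (digital) topology on the integers. -/
def khLine : TopologicalSpace ℤ := generateFrom (Set.range khN)

/-- The Khalimsky topology on the digital plane ℤ × ℤ (product topology). -/
def khPlane : TopologicalSpace (ℤ × ℤ) :=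
  @instTopologicalSpaceProd ℤ ℤ khLine khLine

/-- A point of the digital plane is pure if both coordinates have the same parity. -/
def IsPure (p : ℤ × ℤ) : Prop := p.1 % 2 = p.2 % 2

/-- A point of the digital plane is mixed if it is not pure. -/
def IsMixed (p : ℤ × ℤ) : Prop := ¬ IsPure p

/-- A closed (pure) point: both coordinates even. -/
def IsClosedPt (p : ℤ × ℤ) : Prop := Even p.1 ∧ Even p.2

/-- An open (pure) point: both coordinates odd. -/
def IsOpenPt (p : ℤ × ℤ) : Prop := Odd p.1 ∧ Odd p.2

/-- The minimal open neighborhood N(x) of a point in the digital plane. -/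
def minN (x : ℤ × ℤ) : Set (ℤ × ℤ) := ⋂₀ {U : Set (ℤ × ℤ) | khPlane.IsOpen U ∧ x ∈ U}

/-- The closure cl(x) of a singleton in the digital plane. -/
def clPt (x : ℤ × ℤ) : Set (ℤ × ℤ) := @closure (ℤ × ℤ) khPlane {x}

/-- The adjacency set A(x) of a point of the digital plane. -/
def AdjSet (x : ℤ × ℤ) : Set (ℤ × ℤ) :=
  {y | y ≠ x ∧ @IsConnected (ℤ × ℤ) khPlane {x, y}}

/-- An arc: a subset of the digital plane homeomorphic (in the subspace topology)
to a finite interval of the Khalimsky line. -/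
def IsArc (C : Set (ℤ × ℤ)) : Prop :=
  ∃ a b : ℤ,
    Nonempty (@Homeomorph (↥C) (↥(Set.Icc a b))
      (TopologicalSpace.induced Subtype.val khPlane)
      (TopologicalSpace.induced Subtype.val khLine))

/-- z is an endpoint of the arc C: it has exactly one adjacent point within C. -/
def IsEndpointOf (z : ℤ × ℤ) (C : Set (ℤ × ℤ)) : Prop :=
  z ∈ C ∧ (AdjSet z ∩ C).encard = 1

/-- A Jordan curve in the digital plane. -/
def IsJordanCurve (J : Set (ℤ × ℤ)) : Prop :=
  @IsConnected (ℤ × ℤ) khPlane J ∧ 4 ≤ J.encard ∧ ∀ x ∈ J, IsArc (J \ {x})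

/-- The slant embedding Γ(x,y) = (x+y, y−x) of the Rosenfeld plane into the digital plane. -/
def Γmap (p : ℤ × ℤ) : ℤ × ℤ := (p.1 + p.2, p.2 - p.1)

/-- The operator Γ* turning subsets of ℤ² into subsets of the digital plane. -/
def ΓStar (A : Set (ℤ × ℤ)) : Set (ℤ × ℤ) :=
  Γmap '' A ∪
    {x | IsMixed x ∧ (minN x ⊆ Γmap '' A ∪ {x} ∨ clPt x ⊆ Γmap '' A ∪ {x})}

/-- 8-adjacency in ℤ². -/
def Adj8 (p q : ℤ × ℤ) : Prop := p ≠ q ∧ |p.1 - q.1| ≤ 1 ∧ |p.2 - q.2| ≤ 1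

/-- 4-adjacency in ℤ². -/
def Adj4 (p q : ℤ × ℤ) : Prop := p ≠ q ∧ |p.1 - q.1| + |p.2 - q.2| = 1

/-- The 8-neighbours of x within C. -/
def nbrs8 (C : Set (ℤ × ℤ)) (x : ℤ × ℤ) : Set (ℤ × ℤ) := {y ∈ C | Adj8 x y}

/-- The 4-neighbours of x within C. -/
def nbrs4 (C : Set (ℤ × ℤ)) (x : ℤ × ℤ) : Set (ℤ × ℤ) := {y ∈ C | Adj4 x y}

/-- x is an 8-endpoint of C. -/
def Is8Endpoint (C : Set (ℤ × ℤ)) (x : ℤ × ℤ) : Prop :=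
  x ∈ C ∧ (nbrs8 C x).encard = 1

/-- x is a 4-endpoint of C. -/
def Is4Endpoint (C : Set (ℤ × ℤ)) (x : ℤ × ℤ) : Prop :=
  x ∈ C ∧ (nbrs4 C x).encard = 1

/-- An 8-path: a finite set with exactly two 8-endpoints, every other point
having exactly two 8-adjacent points in the set. -/
def Is8Path (C : Set (ℤ × ℤ)) : Prop :=
  C.Finite ∧ {x | Is8Endpoint C x}.encard = 2 ∧
    ∀ x ∈ C, ¬ Is8Endpoint C x → (nbrs8 C x).encard = 2

/-- A 4-path. -/
def Is4Path (C : Set (ℤ × ℤ)) : Prop :=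
  C.Finite ∧ {x | Is4Endpoint C x}.encard = 2 ∧
    ∀ x ∈ C, ¬ Is4Endpoint C x → (nbrs4 C x).encard = 2

/-- A closed 8-curve: every point has exactly two 8-adjacent points in the set. -/
def Is8ClosedCurve (C : Set (ℤ × ℤ)) : Prop :=
  C.Finite ∧ ∀ x ∈ C, (nbrs8 C x).encard = 2

/-- A closed 4-curve. -/
def Is4ClosedCurve (C : Set (ℤ × ℤ)) : Prop :=
  C.Finite ∧ ∀ x ∈ C, (nbrs4 C x).encard = 2

/-- 8-connectedness: there is no partition into two nonempty pieces that are
not 8-adjacent to each other. -/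
def Conn8 (S : Set (ℤ × ℤ)) : Prop :=
  ¬ ∃ A B : Set (ℤ × ℤ), A.Nonempty ∧ B.Nonempty ∧ A ∪ B = S ∧ A ∩ B = ∅ ∧
      ∀ a ∈ A, ∀ b ∈ B, ¬ Adj8 a b

/-- 4-connectedness. -/
def Conn4 (S : Set (ℤ × ℤ)) : Prop :=
  ¬ ∃ A B : Set (ℤ × ℤ), A.Nonempty ∧ B.Nonempty ∧ A ∪ B = S ∧ A ∩ B = ∅ ∧
      ∀ a ∈ A, ∀ b ∈ B, ¬ Adj4 a b

/-- T is a 4-component of S: a maximal 4-connected subset of S. -/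
def Is4CompOf (T S : Set (ℤ × ℤ)) : Prop :=
  T ⊆ S ∧ Conn4 T ∧ ∀ T' : Set (ℤ × ℤ), T ⊆ T' → T' ⊆ S → Conn4 T' → T' = T

/-- U is a connected component of S in the digital plane. -/
def IsCompOf (U S : Set (ℤ × ℤ)) : Prop :=
  ∃ x ∈ S, @connectedComponentIn (ℤ × ℤ) khPlane S x = U

/-- The set S_J of mixed points of Γ*(Γ⁻¹(J)) having exactly three adjacent points in J. -/
def SJ (J : Set (ℤ × ℤ)) : Set (ℤ × ℤ) :=
  {m | m ∈ ΓStar (Γmap ⁻¹' J) ∧ IsMixed m ∧ (AdjSet m ∩ J).encard = 3}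

/-! ### Auxiliary lemmas -/

lemma mem_khN {m n : ℤ} :
    n ∈ khN m ↔ ((m % 2 = 1 ∧ n = m) ∨ (m % 2 = 0 ∧ (n = m - 1 ∨ n = m ∨ n = m + 1))) := by
  unfold khN
  by_cases h : Odd m
  · have h' := h
    rw [Int.odd_iff] at h'
    simp only [if_pos h, Set.mem_singleton_iff]
    omega
  · have h' : m % 2 = 0 := by rw [Int.odd_iff] at h; omega
    simp only [if_neg h, Set.mem_insert_iff, Set.mem_singleton_iff]
    omega

lemma khN_self (n : ℤ) : n ∈ khN n := by rw [mem_khN]; omega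

lemma khN_isOpen (n : ℤ) : khLine.IsOpen (khN n) :=
  TopologicalSpace.GenerateOpen.basic _ ⟨n, rfl⟩

lemma khN_min {U : Set ℤ} (hU : khLine.IsOpen U) : ∀ n ∈ U, khN n ⊆ U := by
  induction hU with
  | basic V hV =>
    obtain ⟨k, rfl⟩ := hV
    intro n hn x hx
    rw [mem_khN] at *
    omega
  | univ => exact fun n _ x _ => trivial
  | inter U V hU hV ihU ihV => exact fun n hn x hx => ⟨ihU n hn.1 hx, ihV n hn.2 hx⟩
  | sUnion S hS ih =>
    rintro n ⟨V, hVS, hnV⟩ x hx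
    exact ⟨V, hVS, ih V hVS n hnV hx⟩

lemma mem_closure_singleton_line {m n : ℤ} : m ∈ @closure ℤ khLine {n} ↔ n ∈ khN m := by
  rw [@mem_closure_iff ℤ khLine]
  constructor
  · intro h
    obtain ⟨x, hx1, hx2⟩ := h (khN m) (khN_isOpen m) (khN_self m)
    rw [Set.mem_singleton_iff] at hx2
    exact hx2 ▸ hx1
  · intro h o ho hmo
    exact ⟨n, khN_min ho m hmo h, rfl⟩

lemma pair_connected_iff {X : Type*} [TopologicalSpace X] {x y : X} :
    IsConnected ({x, y} : Set X) ↔ x ∈ closure {y} ∨ y ∈ closure {x} := by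
  constructor
  · intro h
    by_contra hc
    push_neg at hc
    rw [mem_closure_iff, mem_closure_iff] at hc
    push_neg at hc
    obtain ⟨⟨U, hU, hxU, hUy⟩, V, hV, hyV, hVx⟩ := hc
    have hcov : ({x, y} : Set X) ⊆ U ∪ V := by
      rintro t (rfl | rfl)
      · exact Or.inl hxU
      · exact Or.inr hyV
    obtain ⟨t, ht, htU, htV⟩ := h.isPreconnected U V hU hV hcov
      ⟨x, Or.inl rfl, hxU⟩ ⟨y, Or.inr rfl, hyV⟩
    rcases ht with rfl | rfl
    · exact Set.eq_empty_iff_forall_notMem.mp hVx t ⟨htV, rfl⟩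
    · exact Set.eq_empty_iff_forall_notMem.mp hUy t ⟨htU, rfl⟩
  · intro h
    rcases h with h | h
    · have h2 : IsConnected ({y} : Set X) := isConnected_singleton
      have h3 := h2.subset_closure (t := ({x, y} : Set X))
        (Set.singleton_subset_iff.2 (Or.inr rfl)) (by
          rintro t (rfl | rfl)
          · exact h
          · exact subset_closure rfl)
      exact h3
    · exact isConnected_singleton.subset_closure (t := ({x, y} : Set X))
        (Set.singleton_subset_iff.2 (Or.inl rfl)) (by
          rintro t (rfl | rfl)
          · exact subset_closure rfl
          · exact h)

lemma mem_closure_singleton_plane {x y : ℤ × ℤ} :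
    x ∈ @closure (ℤ × ℤ) khPlane {y} ↔ y.1 ∈ khN x.1 ∧ y.2 ∈ khN x.2 := by
  letI : TopologicalSpace ℤ := khLine
  have h1 : ({y} : Set (ℤ × ℤ)) = {y.1} ×ˢ {y.2} := by
    rw [Set.singleton_prod_singleton]
  have h2 : @closure (ℤ × ℤ) khPlane {y} = closure {y.1} ×ˢ closure {y.2} := by
    rw [h1]; exact closure_prod_eq
  rw [h2, Set.mem_prod, mem_closure_singleton_line, mem_closure_singleton_line]

lemma mem_adjSet {x y : ℤ × ℤ} :
    y ∈ AdjSet x ↔ y ≠ x ∧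
      ((y.1 ∈ khN x.1 ∧ y.2 ∈ khN x.2) ∨ (x.1 ∈ khN y.1 ∧ x.2 ∈ khN y.2)) := by
  unfold AdjSet
  simp only [Set.mem_setOf_eq]
  refine and_congr_right fun _ => ?_
  rw [@pair_connected_iff _ khPlane x y, mem_closure_singleton_plane,
    mem_closure_singleton_plane]

lemma khLine_pair {m n : ℤ} : @IsConnected ℤ khLine {m, n} ↔ |m - n| ≤ 1 := by
  rw [@pair_connected_iff ℤ khLine, mem_closure_singleton_line,
    mem_closure_singleton_line, mem_khN, mem_khN, abs_le]
  omega

lemma ne_iff_prod {x y : ℤ × ℤ} : y ≠ x ↔ ¬(y.1 = x.1 ∧ y.2 = x.2) := by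
  rw [Ne, Prod.ext_iff]

lemma adjSet_pure {x y : ℤ × ℤ} (hx : IsPure x) :
    y ∈ AdjSet x ↔ ¬(y.1 = x.1 ∧ y.2 = x.2) ∧ |y.1 - x.1| ≤ 1 ∧ |y.2 - x.2| ≤ 1 := by
  rw [mem_adjSet, ne_iff_prod, mem_khN, mem_khN, mem_khN, mem_khN, abs_le, abs_le]
  unfold IsPure at hx
  omega

lemma adjSet_mixed {x y : ℤ × ℤ} (hx : IsMixed x) (h : y ∈ AdjSet x) :
    IsPure y ∧ ((y.1 = x.1 ∧ (y.2 - x.2 = 1 ∨ y.2 - x.2 = -1)) ∨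
      (y.2 = x.2 ∧ (y.1 - x.1 = 1 ∨ y.1 - x.1 = -1))) := by
  rw [mem_adjSet, ne_iff_prod, mem_khN, mem_khN, mem_khN, mem_khN] at h
  unfold IsMixed at hx
  unfold IsPure at hx ⊢
  omega

lemma arc_param {C : Set (ℤ × ℤ)} (harc : IsArc C) (hne : C.Nonempty) :
    ∃ (a b : ℤ) (F : ℤ → ℤ × ℤ), a ≤ b ∧
      C = F '' Set.Icc a b ∧
      (∀ i ∈ Set.Icc a b, ∀ j ∈ Set.Icc a b, F i = F j → i = j) ∧
      (∀ i ∈ Set.Icc a b, ∀ j ∈ Set.Icc a b, (F j ∈ AdjSet (F i) ↔ |i - j| = 1)) := by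
  classical
  obtain ⟨a, b, ⟨e⟩⟩ := harc
  letI : TopologicalSpace (ℤ × ℤ) := khPlane
  letI : TopologicalSpace ℤ := khLine
  have e' : ↥C ≃ₜ ↥(Set.Icc a b) := e
  obtain ⟨x0, hx0⟩ := hne
  have hab : a ≤ b := by
    have h := (e' ⟨x0, hx0⟩).property
    rw [Set.mem_Icc] at h
    omega
  set F : ℤ → ℤ × ℤ :=
    fun i => if h : i ∈ Set.Icc a b then ((e'.symm ⟨i, h⟩ : ↥C) : ℤ × ℤ) else (0, 0) with hF
  have hFval : ∀ i (hi : i ∈ Set.Icc a b), F i = ((e'.symm ⟨i, hi⟩ : ↥C) : ℤ × ℤ) := by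
    intro i hi
    rw [hF]
    exact dif_pos hi
  have hinj : ∀ i ∈ Set.Icc a b, ∀ j ∈ Set.Icc a b, F i = F j → i = j := by
    intro i hi j hj hij
    rw [hFval i hi, hFval j hj] at hij
    have h1 : e'.symm ⟨i, hi⟩ = e'.symm ⟨j, hj⟩ := Subtype.ext hij
    have h2 := e'.symm.injective h1
    exact congrArg Subtype.val h2
  have key : ∀ s t : ↥C,
      IsConnected ({(s : ℤ × ℤ), (t : ℤ × ℤ)} : Set (ℤ × ℤ)) ↔
        |((e' s : ↥(Set.Icc a b)) : ℤ) - ((e' t : ↥(Set.Icc a b)) : ℤ)| ≤ 1 := by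
    intro s t
    have h1 : ({(s : ℤ × ℤ), (t : ℤ × ℤ)} : Set (ℤ × ℤ)) = Subtype.val '' {s, t} :=
      (Set.image_pair _ _ _).symm
    have h2 : IsPreconnected (Subtype.val '' ({s, t} : Set ↥C)) ↔
        IsPreconnected ({s, t} : Set ↥C) :=
      Topology.IsInducing.subtypeVal.isPreconnected_image
    have h3 : IsPreconnected ((e' : ↥C → ↥(Set.Icc a b)) '' {s, t}) ↔
        IsPreconnected ({s, t} : Set ↥C) :=
      e'.isInducing.isPreconnected_image
    have h4 : (e' : ↥C → ↥(Set.Icc a b)) '' ({s, t} : Set ↥C) = {e' s, e' t} :=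
      Set.image_pair _ _ _
    have h5 : ({((e' s : ↥(Set.Icc a b)) : ℤ), ((e' t : ↥(Set.Icc a b)) : ℤ)} : Set ℤ) =
        Subtype.val '' ({e' s, e' t} : Set ↥(Set.Icc a b)) := (Set.image_pair _ _ _).symm
    have h6 : IsPreconnected (Subtype.val '' ({e' s, e' t} : Set ↥(Set.Icc a b))) ↔
        IsPreconnected ({e' s, e' t} : Set ↥(Set.Icc a b)) :=
      Topology.IsInducing.subtypeVal.isPreconnected_image
    have hiff : IsPreconnected ({(s : ℤ × ℤ), (t : ℤ × ℤ)} : Set (ℤ × ℤ)) ↔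
        IsPreconnected ({((e' s : ↥(Set.Icc a b)) : ℤ), ((e' t : ↥(Set.Icc a b)) : ℤ)} : Set ℤ) := by
      rw [h1, h2, ← h3, h4, h5, h6]
    have hiff2 : IsConnected ({(s : ℤ × ℤ), (t : ℤ × ℤ)} : Set (ℤ × ℤ)) ↔
        IsConnected ({((e' s : ↥(Set.Icc a b)) : ℤ), ((e' t : ↥(Set.Icc a b)) : ℤ)} : Set ℤ) :=
      ⟨fun h => ⟨Set.insert_nonempty _ _, hiff.mp h.2⟩,
       fun h => ⟨Set.insert_nonempty _ _, hiff.mpr h.2⟩⟩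
    exact hiff2.trans khLine_pair
  refine ⟨a, b, F, hab, ?_, hinj, ?_⟩
  · ext x
    constructor
    · intro hx
      refine ⟨((e' ⟨x, hx⟩ : ↥(Set.Icc a b)) : ℤ), (e' ⟨x, hx⟩).property, ?_⟩
      rw [hFval _ (e' ⟨x, hx⟩).property]
      have h7 : (⟨((e' ⟨x, hx⟩ : ↥(Set.Icc a b)) : ℤ), (e' ⟨x, hx⟩).property⟩ :
          ↥(Set.Icc a b)) = e' ⟨x, hx⟩ := rfl
      rw [h7, Homeomorph.symm_apply_apply]
    · rintro ⟨i, hi, rfl⟩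
      rw [hFval i hi]
      exact (e'.symm ⟨i, hi⟩).property
  · intro i hi j hj
    have hk := key (e'.symm ⟨i, hi⟩) (e'.symm ⟨j, hj⟩)
    rw [Homeomorph.apply_symm_apply, Homeomorph.apply_symm_apply] at hk
    have hcoe1 : ((⟨i, hi⟩ : ↥(Set.Icc a b)) : ℤ) = i := rfl
    have hcoe2 : ((⟨j, hj⟩ : ↥(Set.Icc a b)) : ℤ) = j := rfl
    rw [hcoe1, hcoe2] at hk
    constructor
    · intro hadj
      obtain ⟨hne', hconn⟩ := hadj
      have hij : i ≠ j := fun h => hne' (h ▸ rfl)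
      have : |i - j| ≤ 1 := by
        apply hk.mp
        rw [← hFval i hi, ← hFval j hj]
        exact hconn
      rw [abs_le] at this
      rw [abs_eq (by norm_num : (0:ℤ) ≤ 1)]
      omega
    · intro habs
      have hij : i ≠ j := by
        intro h
        rw [h] at habs
        simp at habs
      refine ⟨fun h => hij (hinj i hi j hj h.symm), ?_⟩
      show IsConnected ({F i, F j} : Set (ℤ × ℤ))
      rw [hFval i hi, hFval j hj]
      apply hk.mpr
      rw [abs_eq (by norm_num : (0:ℤ) ≤ 1)] at habs
      rw [abs_le]
      omega

lemma adj8_symm {x y : ℤ × ℤ} (h : Adj8 x y) : Adj8 y x :=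
  ⟨h.1.symm, by rw [abs_sub_comm]; exact h.2.1, by rw [abs_sub_comm]; exact h.2.2⟩

lemma ham_endpoint {m : ℕ} (q : ℕ → ℤ × ℤ) (hm : 1 ≤ m)
    (hinj : ∀ k l, k ≤ m → l ≤ m → q k = q l → k = l)
    (hadj : ∀ k, k < m → Adj8 (q k) (q (k + 1)))
    (hpath : Is8Path (q '' {k | k ≤ m})) :
    Is8Endpoint (q '' {k | k ≤ m}) (q 0) ∧ Is8Endpoint (q '' {k | k ≤ m}) (q m) := by
  classical
  set P : Set (ℤ × ℤ) := q '' {k | k ≤ m} with hP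
  set X : Finset (ℤ × ℤ) := (Finset.range (m + 1)).image q with hX
  have hcoeX : (↑X : Set (ℤ × ℤ)) = P := by
    rw [hX, Finset.coe_image, Finset.coe_range, hP]
    congr 1
    ext k
    simp [Nat.lt_succ_iff]
  have hmemX : ∀ k, k ≤ m → q k ∈ X := by
    intro k hk
    rw [hX]
    exact Finset.mem_image.mpr ⟨k, Finset.mem_range.mpr (by omega), rfl⟩
  have hXmem : ∀ x ∈ X, ∃ k ≤ m, q k = x := by
    intro x hx
    rw [hX] at hx
    obtain ⟨k, hk, rfl⟩ := Finset.mem_image.mp hx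
    exact ⟨k, by simpa [Nat.lt_succ_iff] using hk, rfl⟩
  have hnbrs : ∀ x, nbrs8 P x = ↑(X.filter (fun y => Adj8 x y)) := by
    intro x
    ext y
    constructor
    · rintro ⟨h1, h2⟩
      rw [← hcoeX] at h1
      exact Finset.mem_coe.mpr (Finset.mem_filter.mpr ⟨Finset.mem_coe.mp h1, h2⟩)
    · intro h
      obtain ⟨h1, h2⟩ := Finset.mem_filter.mp (Finset.mem_coe.mp h)
      exact ⟨by rw [← hcoeX]; exact h1, h2⟩
  set deg : ℤ × ℤ → ℕ := fun x => (X.filter (fun y => Adj8 x y)).card with hdeg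
  have hend_iff : ∀ x, Is8Endpoint P x ↔ x ∈ X ∧ deg x = 1 := by
    intro x
    unfold Is8Endpoint
    rw [hnbrs x, Set.encard_coe_eq_coe_finsetCard, ← hcoeX]
    simp [hdeg]
  obtain ⟨hfin, h2, hmid⟩ := hpath
  obtain ⟨e1, e2, hne12, hset⟩ := Set.encard_eq_two.mp h2
  have hep : ∀ x, Is8Endpoint P x ↔ (x = e1 ∨ x = e2) := by
    intro x
    constructor
    · intro h
      have : x ∈ {x | Is8Endpoint P x} := h
      rw [hset] at this
      exact this
    · intro h
      have : x ∈ ({e1, e2} : Set (ℤ × ℤ)) := h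
      rw [← hset] at this
      exact this
  have he1 : e1 ∈ X ∧ deg e1 = 1 := (hend_iff e1).mp ((hep e1).mpr (Or.inl rfl))
  have he2 : e2 ∈ X ∧ deg e2 = 1 := (hend_iff e2).mp ((hep e2).mpr (Or.inr rfl))
  have hdeg2 : ∀ x ∈ X, x ≠ e1 → x ≠ e2 → deg x = 2 := by
    intro x hx h1 h2'
    have hxP : x ∈ P := by rw [← hcoeX]; exact hx
    have hnotep : ¬ Is8Endpoint P x := by
      rw [hep]
      tauto
    have := hmid x hxP hnotep
    rw [hnbrs x, Set.encard_coe_eq_coe_finsetCard] at this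
    exact_mod_cast this
  have hcardX : X.card = m + 1 := by
    rw [hX]
    rw [Finset.card_image_of_injOn, Finset.card_range]
    intro k hk l hl hkl
    simp only [Finset.coe_range, Set.mem_Iio] at hk hl
    exact hinj k l (by omega) (by omega) hkl
  have hsub : {e1, e2} ⊆ X := by
    intro x hx
    rcases Finset.mem_insert.mp hx with rfl | hx
    · exact he1.1
    · rw [Finset.mem_singleton] at hx
      subst hx
      exact he2.1
  have hsum : ∑ x ∈ X, deg x = 2 * m := by
    have hXsplit : X = {e1, e2} ∪ (X \ {e1, e2}) := by
      rw [Finset.union_sdiff_of_subset hsub]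
    rw [hXsplit, Finset.sum_union (Finset.disjoint_sdiff)]
    have hpair : ∑ x ∈ ({e1, e2} : Finset (ℤ × ℤ)), deg x = 2 := by
      rw [Finset.sum_insert (by simp [hne12]), Finset.sum_singleton, he1.2, he2.2]
    have hrest : ∑ x ∈ X \ {e1, e2}, deg x = 2 * (m - 1) := by
      have : ∀ x ∈ X \ {e1, e2}, deg x = 2 := by
        intro x hx
        obtain ⟨hx1, hx2⟩ := Finset.mem_sdiff.mp hx
        simp only [Finset.mem_insert, Finset.mem_singleton] at hx2
        push_neg at hx2
        exact hdeg2 x hx1 hx2.1 hx2.2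
      rw [Finset.sum_congr rfl this, Finset.sum_const, smul_eq_mul, Finset.card_sdiff_of_subset hsub]
      have : ({e1, e2} : Finset (ℤ × ℤ)).card = 2 := by
        rw [Finset.card_insert_of_notMem (by simp [hne12]), Finset.card_singleton]
      rw [this, hcardX]
      omega
    rw [hpair, hrest]
    omega
  set E : Finset ((ℤ × ℤ) × (ℤ × ℤ)) :=
    X.biUnion (fun x => (X.filter (fun y => Adj8 x y)).image (fun y => (x, y))) with hE
  have hmemE : ∀ p : (ℤ × ℤ) × (ℤ × ℤ), p ∈ E ↔ p.1 ∈ X ∧ p.2 ∈ X ∧ Adj8 p.1 p.2 := by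
    intro p
    rw [hE, Finset.mem_biUnion]
    constructor
    · rintro ⟨x, hx, hp⟩
      obtain ⟨y, hy, rfl⟩ := Finset.mem_image.mp hp
      obtain ⟨hy1, hy2⟩ := Finset.mem_filter.mp hy
      exact ⟨hx, hy1, hy2⟩
    · rintro ⟨h1, h2, h3⟩
      exact ⟨p.1, h1, Finset.mem_image.mpr ⟨p.2, Finset.mem_filter.mpr ⟨h2, h3⟩, rfl⟩⟩
  have hEcard : E.card = 2 * m := by
    rw [hE, Finset.card_biUnion]
    · calc ∑ x ∈ X, ((X.filter (fun y => Adj8 x y)).image (fun y => (x, y))).card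
          = ∑ x ∈ X, deg x := by
            apply Finset.sum_congr rfl
            intro x _
            rw [Finset.card_image_of_injective _ (fun y z h => (Prod.mk.injEq _ _ _ _).mp h |>.2)]
      _ = 2 * m := hsum
    · intro x hx y hy hxy
      rw [Function.onFun, Finset.disjoint_left]
      rintro p hp hq
      obtain ⟨u, _, rfl⟩ := Finset.mem_image.mp hp
      obtain ⟨v, _, hv⟩ := Finset.mem_image.mp hq
      exact hxy ((Prod.mk.injEq _ _ _ _).mp hv.symm).1
  set T : Finset ((ℤ × ℤ) × (ℤ × ℤ)) :=
    (Finset.range m).biUnion (fun k => {(q k, q (k + 1)), (q (k + 1), q k)}) with hT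
  have hqne : ∀ k, k < m → q k ≠ q (k + 1) := fun k hk => (hadj k hk).1
  have hTcard : T.card = 2 * m := by
    rw [hT, Finset.card_biUnion]
    · have : ∀ k ∈ Finset.range m,
          ({(q k, q (k + 1)), (q (k + 1), q k)} : Finset ((ℤ × ℤ) × (ℤ × ℤ))).card = 2 := by
        intro k hk
        rw [Finset.mem_range] at hk
        rw [Finset.card_insert_of_notMem, Finset.card_singleton]
        simp only [Finset.mem_singleton, Prod.mk.injEq, not_and]
        intro h _
        exact absurd h (hqne k hk)
      rw [Finset.sum_congr rfl this, Finset.sum_const, smul_eq_mul, Finset.card_range]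
      omega
    · intro k hk l hl hkl
      rw [Finset.mem_coe, Finset.mem_range] at hk hl
      rw [Function.onFun, Finset.disjoint_left]
      intro p hp hq
      simp only [Finset.mem_insert, Finset.mem_singleton] at hp hq
      rcases hp with rfl | rfl
      · rcases hq with hq | hq <;> rw [Prod.mk.injEq] at hq
        · exact hkl (hinj k l (by omega) (by omega) hq.1)
        · have h5 := hinj k (l + 1) (by omega) (by omega) hq.1
          have h6 := hinj (k + 1) l (by omega) (by omega) hq.2
          omega
      · rcases hq with hq | hq <;> rw [Prod.mk.injEq] at hq
        · have h5 := hinj (k + 1) l (by omega) (by omega) hq.1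
          have h6 := hinj k (l + 1) (by omega) (by omega) hq.2
          omega
        · have h5 := hinj (k + 1) (l + 1) (by omega) (by omega) hq.1
          omega
  have hTE : T ⊆ E := by
    intro p hp
    rw [hT, Finset.mem_biUnion] at hp
    obtain ⟨k, hk, hp⟩ := hp
    rw [Finset.mem_range] at hk
    simp only [Finset.mem_insert, Finset.mem_singleton] at hp
    rcases hp with rfl | rfl
    · exact (hmemE _).mpr ⟨hmemX k (by omega), hmemX (k + 1) (by omega), hadj k hk⟩
    · exact (hmemE _).mpr ⟨hmemX (k + 1) (by omega), hmemX k (by omega),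
        adj8_symm (hadj k hk)⟩
  have hET : T = E := Finset.eq_of_subset_of_card_le hTE (by rw [hEcard, hTcard])
  have hmemT : ∀ p : (ℤ × ℤ) × (ℤ × ℤ), p ∈ T ↔
      ∃ k < m, p = (q k, q (k + 1)) ∨ p = (q (k + 1), q k) := by
    intro p
    rw [hT, Finset.mem_biUnion]
    constructor
    · rintro ⟨k, hk, hp⟩
      rw [Finset.mem_range] at hk
      simp only [Finset.mem_insert, Finset.mem_singleton] at hp
      exact ⟨k, hk, hp⟩
    · rintro ⟨k, hk, hp⟩
      exact ⟨k, Finset.mem_range.mpr hk, by simpa using hp⟩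
  have hq0 : X.filter (fun y => Adj8 (q 0) y) = {q 1} := by
    ext y
    rw [Finset.mem_filter, Finset.mem_singleton]
    constructor
    · rintro ⟨hy, hadj0⟩
      have : (q 0, y) ∈ E := (hmemE _).mpr ⟨hmemX 0 (by omega), hy, hadj0⟩
      rw [← hET, hmemT] at this
      obtain ⟨k, hk, h | h⟩ := this
      · rw [Prod.mk.injEq] at h
        have : (0 : ℕ) = k := hinj 0 k (by omega) (by omega) h.1
        rw [← this] at h
        exact h.2
      · rw [Prod.mk.injEq] at h
        have : (0 : ℕ) = k + 1 := hinj 0 (k + 1) (by omega) (by omega) h.1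
        omega
    · rintro rfl
      have : (q 0, q 1) ∈ T := (hmemT _).mpr ⟨0, by omega, Or.inl rfl⟩
      rw [hET, hmemE] at this
      exact ⟨this.2.1, this.2.2⟩
  have hqm : X.filter (fun y => Adj8 (q m) y) = {q (m - 1)} := by
    ext y
    rw [Finset.mem_filter, Finset.mem_singleton]
    constructor
    · rintro ⟨hy, hadjm⟩
      have : (q m, y) ∈ E := (hmemE _).mpr ⟨hmemX m (by omega), hy, hadjm⟩
      rw [← hET, hmemT] at this
      obtain ⟨k, hk, h | h⟩ := this
      · rw [Prod.mk.injEq] at h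
        have : m = k := hinj m k (by omega) (by omega) h.1
        omega
      · rw [Prod.mk.injEq] at h
        have : m = k + 1 := hinj m (k + 1) (by omega) (by omega) h.1
        rw [h.2, show k = m - 1 by omega]
    · rintro rfl
      have : (q (m - 1), q m) ∈ T := (hmemT _).mpr
        ⟨m - 1, by omega, by rw [show m - 1 + 1 = m by omega]; exact Or.inl rfl⟩
      rw [hET, hmemE] at this
      exact ⟨this.1, adj8_symm this.2.2⟩
  constructor
  · rw [hend_iff]
    exact ⟨hmemX 0 (by omega), by rw [hdeg]; simp only [hq0, Finset.card_singleton]⟩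
  · rw [hend_iff]
    exact ⟨hmemX m (by omega), by rw [hdeg]; simp only [hqm, Finset.card_singleton]⟩

/-- Inverse of the slant embedding on pure points. -/
def Γinv (u : ℤ × ℤ) : ℤ × ℤ := ((u.1 - u.2) / 2, (u.1 + u.2) / 2)

lemma gamma_pure (p : ℤ × ℤ) : IsPure (Γmap p) := by
  unfold IsPure Γmap
  omega

lemma gamma_leftinv (p : ℤ × ℤ) : Γinv (Γmap p) = p := by
  unfold Γinv Γmap
  rw [Prod.ext_iff]
  constructor <;> simp <;> omega

lemma gamma_inv_map {u : ℤ × ℤ} (hu : IsPure u) : Γmap (Γinv u) = u := by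
  unfold IsPure at hu
  unfold Γinv Γmap
  rw [Prod.ext_iff]
  constructor <;> simp <;> omega

lemma adj8_of_diff {u v : ℤ × ℤ} (hu : IsPure u) (hv : IsPure v) (hne : u ≠ v)
    (h1 : -2 ≤ u.1 - v.1 - (u.2 - v.2)) (h2 : u.1 - v.1 - (u.2 - v.2) ≤ 2)
    (h3 : -2 ≤ u.1 - v.1 + (u.2 - v.2)) (h4 : u.1 - v.1 + (u.2 - v.2) ≤ 2) :
    Adj8 (Γinv u) (Γinv v) := by
  refine ⟨?_, ?_, ?_⟩
  · intro h
    apply hne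
    have := congrArg Γmap h
    rwa [gamma_inv_map hu, gamma_inv_map hv] at this
  · unfold IsPure at hu hv
    unfold Γinv
    simp only
    rw [abs_le]
    omega
  · unfold IsPure at hu hv
    unfold Γinv
    simp only
    rw [abs_le]
    omega

open Classical in
/-- The sequence of indices of pure points along the arc parametrization. -/
noncomputable def idxSeq (F : ℤ → ℤ × ℤ) (a : ℤ) : ℕ → ℤ
  | 0 => a
  | k + 1 =>
    if IsPure (F (idxSeq F a k + 1)) then idxSeq F a k + 1 else idxSeq F a k + 2


/-- If C is an arc in the digital plane with at least two points whose endpoints z, w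
are pure, and Γ⁻¹(C) is an 8-path, then Γ⁻¹(z) and Γ⁻¹(w) are the two 8-endpoints
of Γ⁻¹(C). -/
theorem endpoints_of_preimage_8path (C : Set (ℤ × ℤ)) (z w : ℤ × ℤ)
    (harc : IsArc C) (hcard : 2 ≤ C.encard) (hzw : z ≠ w)
    (hz : IsEndpointOf z C) (hw : IsEndpointOf w C)
    (hzp : IsPure z) (hwp : IsPure w) (hpath : Is8Path (Γmap ⁻¹' C)) :
    ∀ p : ℤ × ℤ, Is8Endpoint (Γmap ⁻¹' C) p ↔ (Γmap p = z ∨ Γmap p = w) := by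
  classical
  have hCne : C.Nonempty := ⟨z, hz.1⟩
  obtain ⟨a, b, F, hab0, hC, hinj, hadjF⟩ := arc_param harc hCne
  -- locate the endpoints at the extremities of the parametrization
  have hloc : ∀ v, IsEndpointOf v C → v = F a ∨ v = F b := by
    intro v hv
    obtain ⟨hvC, hvcard⟩ := hv
    rw [hC] at hvC
    obtain ⟨k, hk, rfl⟩ := hvC
    by_contra hcon
    push_neg at hcon
    have hka : k ≠ a := by
      intro h
      exact hcon.1 (by rw [h])
    have hkb : k ≠ b := by
      intro h
      exact hcon.2 (by rw [h])
    rw [Set.mem_Icc] at hk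
    have hk1 : k - 1 ∈ Set.Icc a b := by rw [Set.mem_Icc]; omega
    have hk2 : k + 1 ∈ Set.Icc a b := by rw [Set.mem_Icc]; omega
    have hkI : k ∈ Set.Icc a b := by rw [Set.mem_Icc]; omega
    have m1 : F (k - 1) ∈ AdjSet (F k) ∩ C := by
      refine ⟨(hadjF k hkI (k - 1) hk1).mpr ?_, by rw [hC]; exact ⟨k - 1, hk1, rfl⟩⟩
      rw [abs_eq (by norm_num : (0:ℤ) ≤ 1)]
      omega
    have m2 : F (k + 1) ∈ AdjSet (F k) ∩ C := by
      refine ⟨(hadjF k hkI (k + 1) hk2).mpr ?_, by rw [hC]; exact ⟨k + 1, hk2, rfl⟩⟩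
      rw [abs_eq (by norm_num : (0:ℤ) ≤ 1)]
      omega
    have hne' : F (k - 1) ≠ F (k + 1) := by
      intro h
      have := hinj (k - 1) hk1 (k + 1) hk2 h
      omega
    have h2le : 2 ≤ (AdjSet (F k) ∩ C).encard := by
      have hsub2 : ({F (k - 1), F (k + 1)} : Set (ℤ × ℤ)) ⊆ AdjSet (F k) ∩ C := by
        rintro t (rfl | rfl)
        · exact m1
        · exact m2
      calc (2 : ℕ∞) = ({F (k - 1), F (k + 1)} : Set (ℤ × ℤ)).encard :=
            (Set.encard_pair hne').symm
        _ ≤ (AdjSet (F k) ∩ C).encard := Set.encard_le_encard hsub2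
    rw [hvcard] at h2le
    norm_num at h2le
  have hza : z = F a ∨ z = F b := hloc z hz
  have hwa : w = F a ∨ w = F b := hloc w hw
  have hFab : (z = F a ∧ w = F b) ∨ (z = F b ∧ w = F a) := by
    rcases hza with h1 | h1 <;> rcases hwa with h2 | h2
    · exact absurd (h1.trans h2.symm) hzw
    · exact Or.inl ⟨h1, h2⟩
    · exact Or.inr ⟨h1, h2⟩
    · exact absurd (h1.trans h2.symm) hzw
  have hpureA : IsPure (F a) := by
    rcases hFab with ⟨h1, _⟩ | ⟨_, h2⟩
    · exact h1 ▸ hzp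
    · exact h2 ▸ hwp
  have hpureB : IsPure (F b) := by
    rcases hFab with ⟨_, h2⟩ | ⟨h1, _⟩
    · exact h2 ▸ hwp
    · exact h1 ▸ hzp
  have hFaFb : F a ≠ F b := by
    rcases hFab with ⟨h1, h2⟩ | ⟨h1, h2⟩
    · rw [← h1, ← h2]; exact hzw
    · rw [← h1, ← h2]; exact hzw.symm
  have hab : a < b := by
    rcases eq_or_lt_of_le hab0 with h | h
    · exact absurd (by rw [h]) hFaFb
    · exact h
  -- the one/two step lemma along the arc
  have hstep : ∀ i, a ≤ i → i < b → IsPure (F i) →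
      ∃ j, i < j ∧ j ≤ b ∧ IsPure (F j) ∧
        ((IsPure (F (i + 1)) ∧ j = i + 1) ∨ (¬ IsPure (F (i + 1)) ∧ j = i + 2)) ∧
        Adj8 (Γinv (F i)) (Γinv (F j)) := by
    intro i hia hib hpi
    have hiI : i ∈ Set.Icc a b := by rw [Set.mem_Icc]; omega
    have hi1I : i + 1 ∈ Set.Icc a b := by rw [Set.mem_Icc]; omega
    have hadj1 : F (i + 1) ∈ AdjSet (F i) := by
      refine (hadjF i hiI (i + 1) hi1I).mpr ?_
      rw [abs_eq (by norm_num : (0:ℤ) ≤ 1)]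
      omega
    by_cases hp : IsPure (F (i + 1))
    · refine ⟨i + 1, by omega, by rw [Set.mem_Icc] at hi1I; omega, hp, Or.inl ⟨hp, rfl⟩, ?_⟩
      obtain ⟨hne1, hb1, hb2⟩ := (adjSet_pure hpi).mp hadj1
      rw [abs_le] at hb1 hb2
      refine adj8_of_diff hpi hp ?_ (by omega) (by omega) (by omega) (by omega)
      rw [ne_iff_prod]
      intro hcc
      exact hne1 ⟨hcc.1.symm, hcc.2.symm⟩
    · -- F (i+1) is mixed; the next pure point is F (i+2)
      have hib1 : i + 1 < b := by
        rcases eq_or_lt_of_le (Set.mem_Icc.mp hi1I).2 with h | h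
        · exact absurd (h ▸ hpureB) hp
        · exact h
      have hi2I : i + 2 ∈ Set.Icc a b := by rw [Set.mem_Icc]; omega
      have hadj2 : F (i + 2) ∈ AdjSet (F (i + 1)) := by
        refine (hadjF (i + 1) hi1I (i + 2) hi2I).mpr ?_
        rw [abs_eq (by norm_num : (0:ℤ) ≤ 1)]
        omega
      have hadj0 : F i ∈ AdjSet (F (i + 1)) := by
        refine (hadjF (i + 1) hi1I i hiI).mpr ?_
        rw [abs_eq (by norm_num : (0:ℤ) ≤ 1)]
        omega
      have hmix : IsMixed (F (i + 1)) := hp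
      obtain ⟨hp2, hgeo2⟩ := adjSet_mixed hmix hadj2
      obtain ⟨_, hgeo0⟩ := adjSet_mixed hmix hadj0
      have hne02 : F i ≠ F (i + 2) := by
        intro h
        have := hinj i hiI (i + 2) hi2I h
        omega
      refine ⟨i + 2, by omega, by rw [Set.mem_Icc] at hi2I; omega, hp2, Or.inr ⟨hp, rfl⟩, ?_⟩
      unfold IsPure at hpi hp2
      refine adj8_of_diff hpi hp2 hne02 ?_ ?_ ?_ ?_ <;> omega
  -- basic properties of the index sequence
  have hidx0 : idxSeq F a 0 = a := rfl
  have hidxsucc : ∀ k, idxSeq F a (k + 1) =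
      if IsPure (F (idxSeq F a k + 1)) then idxSeq F a k + 1 else idxSeq F a k + 2 := by
    intro k
    rfl
  have hmono1 : ∀ k, idxSeq F a k < idxSeq F a (k + 1) := by
    intro k
    rw [hidxsucc k]
    split <;> omega
  have hmono : StrictMono (idxSeq F a) := strictMono_nat_of_lt_succ hmono1
  -- the invariant: while below b, indices are pure and within [a,b]
  have hinv : ∀ k : ℕ, (∀ l : ℕ, l < k → idxSeq F a l < b) →
      a ≤ idxSeq F a k ∧ idxSeq F a k ≤ b ∧ IsPure (F (idxSeq F a k)) := by
    intro k
    induction k with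
    | zero => exact fun _ => ⟨le_refl a, le_of_lt hab, hpureA⟩
    | succ n ih =>
      intro hl
      have hn := ih (fun l hln => hl l (by omega))
      have hnb : idxSeq F a n < b := hl n (by omega)
      obtain ⟨j, hj1, hj2, hj3, hj4, _⟩ := hstep (idxSeq F a n) hn.1 hnb hn.2.2
      have hjeq : idxSeq F a (n + 1) = j := by
        rw [hidxsucc n]
        rcases hj4 with ⟨hpu, rfl⟩ | ⟨hpu, rfl⟩
        · rw [if_pos hpu]
        · rw [if_neg hpu]
      rw [hjeq]
      exact ⟨by omega, hj2, hj3⟩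
  -- coverage: every pure index is hit
  have hcov : ∀ n : ℕ, ∀ j : ℤ, (j - a).toNat = n → a ≤ j → j ≤ b → IsPure (F j) →
      ∃ k, idxSeq F a k = j := by
    intro n
    induction n using Nat.strong_induction_on with
    | _ n IH =>
      intro j hn hja hjb hpj
      by_cases h0 : j = a
      · exact ⟨0, by rw [hidx0, h0]⟩
      · have hja' : a < j := lt_of_le_of_ne hja (Ne.symm h0)
        by_cases hp1 : IsPure (F (j - 1))
        · obtain ⟨k, hk⟩ := IH (j - 1 - a).toNat (by omega) (j - 1) rfl (by omega)
            (by omega) hp1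
          refine ⟨k + 1, ?_⟩
          rw [hidxsucc k, hk, show j - 1 + 1 = j by ring, if_pos hpj]
        · -- F (j-1) is mixed, so j - 2 is pure and ≥ a
          have hj1a : a < j - 1 := by
            rcases eq_or_lt_of_le (by omega : a ≤ j - 1) with h | h
            · exact absurd (h ▸ hpureA) hp1
            · exact h
          have hj1I : j - 1 ∈ Set.Icc a b := by rw [Set.mem_Icc]; omega
          have hj2I : j - 2 ∈ Set.Icc a b := by rw [Set.mem_Icc]; omega
          have hadj2 : F (j - 2) ∈ AdjSet (F (j - 1)) := by
            refine (hadjF (j - 1) hj1I (j - 2) hj2I).mpr ?_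
            rw [abs_eq (by norm_num : (0:ℤ) ≤ 1)]
            omega
          have hmix : IsMixed (F (j - 1)) := hp1
          obtain ⟨hp2, _⟩ := adjSet_mixed hmix hadj2
          obtain ⟨k, hk⟩ := IH (j - 2 - a).toNat (by omega) (j - 2) rfl (by omega)
            (by omega) hp2
          refine ⟨k + 1, ?_⟩
          rw [hidxsucc k, hk, show j - 2 + 1 = j - 1 by ring, if_neg hp1]
          omega
  obtain ⟨m, hm⟩ := hcov (b - a).toNat b rfl (le_of_lt hab) (le_refl b) hpureB
  have hm1 : 1 ≤ m := by
    rcases Nat.eq_zero_or_pos m with h | h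
    · rw [h, hidx0] at hm
      omega
    · exact h
  have hlb : ∀ l : ℕ, l < m → idxSeq F a l < b := by
    intro l hl
    rw [← hm]
    exact hmono hl
  have hinvle : ∀ k : ℕ, k ≤ m →
      a ≤ idxSeq F a k ∧ idxSeq F a k ≤ b ∧ IsPure (F (idxSeq F a k)) := by
    intro k hk
    exact hinv k (fun l hl => hlb l (by omega))
  set q : ℕ → ℤ × ℤ := fun k => Γinv (F (idxSeq F a k)) with hq
  have hqmap : ∀ k, k ≤ m → Γmap (q k) = F (idxSeq F a k) := by
    intro k hk
    rw [hq]
    exact gamma_inv_map (hinvle k hk).2.2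
  have hidxI : ∀ k, k ≤ m → idxSeq F a k ∈ Set.Icc a b := by
    intro k hk
    have := hinvle k hk
    rw [Set.mem_Icc]
    exact ⟨this.1, this.2.1⟩
  have hqinj : ∀ k l, k ≤ m → l ≤ m → q k = q l → k = l := by
    intro k l hk hl hkl
    have h1 : Γmap (q k) = Γmap (q l) := by rw [hkl]
    rw [hqmap k hk, hqmap l hl] at h1
    have h2 := hinj _ (hidxI k hk) _ (hidxI l hl) h1
    exact hmono.injective h2
  have hqadj : ∀ k, k < m → Adj8 (q k) (q (k + 1)) := by
    intro k hk
    have hik := hinvle k (by omega)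
    obtain ⟨j, hj1, hj2, hj3, hj4, hj5⟩ := hstep (idxSeq F a k) hik.1 (hlb k hk) hik.2.2
    have hjeq : idxSeq F a (k + 1) = j := by
      rw [hidxsucc k]
      rcases hj4 with ⟨hpu, rfl⟩ | ⟨hpu, rfl⟩
      · rw [if_pos hpu]
      · rw [if_neg hpu]
    rw [hq]
    simp only
    rw [hjeq]
    exact hj5
  -- the preimage of C is the image of the sequence
  have hPeq : Γmap ⁻¹' C = q '' {k | k ≤ m} := by
    ext p
    constructor
    · intro hp
      have hpC : Γmap p ∈ C := hp
      rw [hC] at hpC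
      obtain ⟨j, hjI, hjeq⟩ := hpC
      have hpj : IsPure (F j) := by rw [hjeq]; exact gamma_pure p
      rw [Set.mem_Icc] at hjI
      obtain ⟨k, hk⟩ := hcov (j - a).toNat j rfl hjI.1 hjI.2 hpj
      have hkm : k ≤ m := by
        by_contra hcon
        push_neg at hcon
        have := hmono hcon
        rw [hm, hk] at this
        omega
      refine ⟨k, hkm, ?_⟩
      rw [hq]
      simp only
      rw [hk, hjeq, gamma_leftinv]
    · rintro ⟨k, hk, rfl⟩
      have : Γmap (q k) = F (idxSeq F a k) := hqmap k hk
      show Γmap (q k) ∈ C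
      rw [this, hC]
      exact ⟨idxSeq F a k, hidxI k hk, rfl⟩
  rw [hPeq] at hpath
  obtain ⟨hend0, hendm⟩ := ham_endpoint q hm1 hqinj hqadj hpath
  -- identify the two 8-endpoints
  obtain ⟨hfin, h2, hmid⟩ := hpath
  obtain ⟨e1, e2, hne12, hset⟩ := Set.encard_eq_two.mp h2
  have hq0m : q 0 ≠ q m := fun h => by
    have := hqinj 0 m (by omega) (le_refl m) h
    omega
  have h0mem : q 0 ∈ ({e1, e2} : Set (ℤ × ℤ)) := by rw [← hset]; exact hend0
  have hmmem : q m ∈ ({e1, e2} : Set (ℤ × ℤ)) := by rw [← hset]; exact hendm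
  have hsetq : {x | Is8Endpoint (q '' {k | k ≤ m}) x} = {q 0, q m} := by
    rw [Set.mem_insert_iff, Set.mem_singleton_iff] at h0mem hmmem
    rw [hset]
    rcases h0mem with h0 | h0 <;> rcases hmmem with hmm | hmm
    · exact absurd (h0.trans hmm.symm) hq0m
    · rw [← h0, ← hmm]
    · rw [← h0, ← hmm, Set.pair_comm]
    · exact absurd (h0.trans hmm.symm) hq0m
  have hq0v : Γmap (q 0) = F a := by rw [hqmap 0 (by omega), hidx0]
  have hqmv : Γmap (q m) = F b := by rw [hqmap m (le_refl m), hm]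
  intro p
  rw [← hPeq] at hsetq
  constructor
  · intro hp
    have : p ∈ {x | Is8Endpoint (Γmap ⁻¹' C) x} := hp
    rw [hsetq] at this
    rcases this with rfl | rfl
    · rw [hq0v]
      rcases hFab with ⟨h1, _⟩ | ⟨_, h2⟩
      · exact Or.inl h1.symm
      · exact Or.inr h2.symm
    · rw [hqmv]
      rcases hFab with ⟨_, h2⟩ | ⟨h1, _⟩
      · exact Or.inr h2.symm
      · exact Or.inl h1.symm
  · intro hp
    have hpv : Γmap p = F a ∨ Γmap p = F b := by
      rcases hp with h | h <;> rcases hFab with ⟨h1, h2⟩ | ⟨h1, h2⟩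
      · exact Or.inl (h.trans h1)
      · exact Or.inr (h.trans h1)
      · exact Or.inr (h.trans h2)
      · exact Or.inl (h.trans h2)
    have hpq : p = q 0 ∨ p = q m := by
      rcases hpv with h | h
      · left
        rw [← hq0v] at h
        have := congrArg Γinv h
        rwa [gamma_leftinv, gamma_leftinv] at this
      · right
        rw [← hqmv] at h
        have := congrArg Γinv h
        rwa [gamma_leftinv, gamma_leftinv] at this
    have : p ∈ {x | Is8Endpoint (Γmap ⁻¹' C) x} := by
      rw [hsetq]
      exact hpq
    exact this
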